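/- Let g be a real semisimple Lie algebra with Cartan involution σ, Killing form β, maximal abelian a ⊂ p, and m the centralizer of a in k. For every restricted root λ ∈ Σ and every nonzero X ∈ g_λ, one has [m, X] = X^⊥(λ) = {Y ∈ g_λ : β(X, σ(Y)) = 0}. In particular g_λ = ℝX ⊕ [m, X] as an orthogonal direct sum with respect to β^σ. -/

import Mathlib

open LieAlgebra

/-- For nonzero `X ∈ g_lam`: `⁅m, X⁆ = X^⊥(lam)` and `g_lam = ℝ X ⊕ ⁅m, X⁆`. -/
theorem bracket_m_eq_orthogonal_and_decomp
    (L : Type*) [LieRing L] [LieAlgebra ℝ L] [Module.Finite ℝ L]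
    [LieAlgebra.IsSemisimple ℝ L]
    (σ : L →ₗ[ℝ] L)
    (hσlie : ∀ x y : L, σ ⁅x, y⁆ = ⁅σ x, σ y⁆)
    (hσinv : ∀ x : L, σ (σ x) = x)
    (hσpos : ∀ x : L, x ≠ 0 → 0 < -(killingForm ℝ L x (σ x)))
    (a : LieSubalgebra ℝ L)
    (ha_p : ∀ x ∈ a, σ x = -x)
    (ha_ab : ∀ x ∈ a, ∀ y ∈ a, ⁅x, y⁆ = 0)
    (ha_max : ∀ x : L, σ x = -x → (∀ y ∈ a, ⁅x, y⁆ = 0) → x ∈ a)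
    (lam : L →ₗ[ℝ] ℝ)
    (hroot_ne : ∃ H ∈ a, lam H ≠ 0)
    (hroot : ∃ X : L, X ≠ 0 ∧ ∀ H ∈ a, ⁅H, X⁆ = lam H • X)
    (Hlam : L) (hHlam : Hlam ∈ a)
    (hHlam_def : ∀ H ∈ a, killingForm ℝ L Hlam H = lam H)
    (X : L) (hX0 : X ≠ 0) (hX : ∀ H ∈ a, ⁅H, X⁆ = lam H • X) :
    ({Z : L | ∃ Y : L, (σ Y = Y ∧ ∀ H ∈ a, ⁅H, Y⁆ = 0) ∧ Z = ⁅Y, X⁆}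
        = {Z : L | (∀ H ∈ a, ⁅H, Z⁆ = lam H • Z) ∧ killingForm ℝ L X (σ Z) = 0}) ∧
    (∀ Z : L, (∀ H ∈ a, ⁅H, Z⁆ = lam H • Z) →
        ∃ c : ℝ, ∃ Y : L, (σ Y = Y ∧ ∀ H ∈ a, ⁅H, Y⁆ = 0) ∧ Z = c • X + ⁅Y, X⁆) ∧
    (∀ c : ℝ, ∀ Y : L, (σ Y = Y ∧ ∀ H ∈ a, ⁅H, Y⁆ = 0) → c • X = ⁅Y, X⁆ → c = 0) := by
  set K := killingForm ℝ L with hKdef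
  -- Basic facts about the Killing form
  have hsymm : ∀ x y : L, K x y = K y x := fun x y => LieModule.traceForm_comm ℝ L L x y
  have hinv : ∀ x y z : L, K ⁅x, y⁆ z = K x ⁅y, z⁆ :=
    fun x y z => LieModule.traceForm_apply_lie_apply ℝ L L x y z
  have hski : ∀ x y z : L, K y ⁅x, z⁆ = -(K ⁅x, y⁆ z) := by
    intro x y z
    have h := hinv y x z
    have h2 : (⁅y, x⁆ : L) = -⁅x, y⁆ := (lie_skew y x).symm
    rw [h2, map_neg, LinearMap.neg_apply] at h
    linarith
  -- σ-invariance of the Killing form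
  have hσσ : σ ∘ₗ σ = LinearMap.id := by ext z; simp [hσinv]
  have hσinvK : ∀ x y : L, K (σ x) (σ y) = K x y := by
    intro x y
    have had : ∀ u : L, (ad ℝ L (σ u) : L →ₗ[ℝ] L) = σ ∘ₗ (ad ℝ L u : L →ₗ[ℝ] L) ∘ₗ σ := by
      intro u; ext z
      simp only [LieHom.coe_toLinearMap, ad_apply, LinearMap.coe_comp, Function.comp_apply]
      conv_lhs => rw [← hσinv z]
      rw [← hσlie]
    rw [hKdef, killingForm_apply_apply, killingForm_apply_apply, had, had]
    have hc : (σ ∘ₗ (ad ℝ L x : L →ₗ[ℝ] L) ∘ₗ σ) ∘ₗ σ ∘ₗ (ad ℝ L y : L →ₗ[ℝ] L) ∘ₗ σ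
        = σ ∘ₗ (((ad ℝ L x : L →ₗ[ℝ] L) ∘ₗ (ad ℝ L y : L →ₗ[ℝ] L)) ∘ₗ σ) := by
      simp only [← LinearMap.comp_assoc]
      congr 1
      simp [LinearMap.comp_assoc, hσσ]
    rw [hc]
    rw [show σ ∘ₗ (((ad ℝ L x : L →ₗ[ℝ] L) ∘ₗ (ad ℝ L y : L →ₗ[ℝ] L)) ∘ₗ σ)
        = σ * (((ad ℝ L x : L →ₗ[ℝ] L) * (ad ℝ L y : L →ₗ[ℝ] L)) * σ) from rfl,
      LinearMap.trace_mul_comm, mul_assoc,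
      show σ * σ = 1 from hσσ, mul_one]
    rfl
  have hipsym : ∀ x y : L, K x (σ y) = K y (σ x) := by
    intro x y
    calc K x (σ y) = K (σ x) (σ (σ y)) := (hσinvK x (σ y)).symm
    _ = K (σ x) y := by rw [hσinv]
    _ = K y (σ x) := hsymm _ _
  have hneg : ∀ x : L, K x (σ x) ≤ 0 := by
    intro x
    by_cases hx : x = 0
    · simp [hx]
    · have := hσpos x hx; linarith
  have hdef : ∀ x : L, K x (σ x) = 0 → x = 0 := by
    intro x hx
    by_contra hx0
    have := hσpos x hx0
    rw [hx] at this
    simp at this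
  -- b = K X (σ X) < 0
  have hb : K X (σ X) < 0 := by have := hσpos X hX0; linarith
  have hbne : K X (σ X) ≠ 0 := ne_of_lt hb
  -- bracket of a-elements with σ-images
  have hσbr : ∀ H ∈ a, ∀ Z : L, ⁅H, σ Z⁆ = -σ ⁅H, Z⁆ := by
    intro H hH Z
    have h := hσlie H (σ Z)
    rw [hσinv, ha_p H hH, neg_lie] at h
    calc ⁅H, σ Z⁆ = σ (σ ⁅H, σ Z⁆) := (hσinv _).symm
    _ = -σ ⁅H, Z⁆ := by rw [h, map_neg]
  have hσg : ∀ Z : L, (∀ H ∈ a, ⁅H, Z⁆ = lam H • Z) →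
      ∀ H ∈ a, ⁅H, σ Z⁆ = -(lam H • σ Z) := by
    intro Z hZ H hH
    rw [hσbr H hH, hZ H hH, map_smul]
  -- elements of a orthogonal to a vanish
  have hazero : ∀ P ∈ a, (∀ H ∈ a, K P H = 0) → P = 0 := by
    intro P hP hPH
    apply hdef
    rw [ha_p P hP, map_neg, hPH P hP, neg_zero]
  -- ⁅Y, X⁆ is orthogonal to X for σ-fixed Y
  have key1 : ∀ Y : L, σ Y = Y → K X (σ ⁅Y, X⁆) = 0 := by
    intro Y hY
    have h1 : σ ⁅Y, X⁆ = ⁅Y, σ X⁆ := by rw [hσlie, hY]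
    have h2 : K X ⁅Y, σ X⁆ = -(K ⁅Y, X⁆ (σ X)) := hski Y X (σ X)
    have h3 : K ⁅Y, X⁆ (σ X) = K X ⁅Y, σ X⁆ := by
      calc K ⁅Y, X⁆ (σ X) = K (σ ⁅Y, X⁆) (σ (σ X)) := (hσinvK _ _).symm
      _ = K ⁅Y, σ X⁆ X := by rw [h1, hσinv]
      _ = K X ⁅Y, σ X⁆ := hsymm _ _
    rw [h1]
    linarith
  -- ⁅Y, X⁆ lies in g_lam for Y ∈ m
  have hglam_bk : ∀ Y : L, (∀ H ∈ a, ⁅H, Y⁆ = 0) →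
      ∀ H ∈ a, ⁅H, ⁅Y, X⁆⁆ = lam H • ⁅Y, X⁆ := by
    intro Y hY H hH
    rw [leibniz_lie, hY H hH, hX H hH, zero_lie, lie_smul, zero_add]
  -- Facts about Hlam
  have hHlam0 : Hlam ≠ 0 := by
    obtain ⟨H, hH, hlH⟩ := hroot_ne
    intro h0
    apply hlH
    rw [← hHlam_def H hH, h0]
    simp
  have hll : 0 < lam Hlam := by
    have h1 : K Hlam Hlam = lam Hlam := hHlam_def Hlam hHlam
    have h2 := hσpos Hlam hHlam0
    rw [ha_p Hlam hHlam, map_neg] at h2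
    linarith
  -- ⁅X, σ X⁆ = K X (σ X) • Hlam
  have h0eq : ⁅X, σ X⁆ = K X (σ X) • Hlam := by
    have hσc : σ (⁅X, σ X⁆ - K X (σ X) • Hlam) = -(⁅X, σ X⁆ - K X (σ X) • Hlam) := by
      rw [map_sub, map_smul, hσlie, hσinv, ha_p Hlam hHlam]
      rw [show (⁅σ X, X⁆ : L) = -⁅X, σ X⁆ from (lie_skew (σ X) X).symm]
      module
    have hbrc : ∀ H ∈ a, ⁅⁅X, σ X⁆ - K X (σ X) • Hlam, H⁆ = 0 := by
      intro H hH
      have e1 : ⁅H, (⁅X, σ X⁆ : L)⁆ = 0 := by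
        rw [leibniz_lie, hX H hH, hσg X hX H hH, smul_lie, lie_neg, lie_smul]
        abel
      have e2 : (⁅Hlam, H⁆ : L) = 0 := ha_ab Hlam hHlam H hH
      rw [sub_lie, smul_lie, e2, ← lie_skew, e1]
      simp
    have hPa : ⁅X, σ X⁆ - K X (σ X) • Hlam ∈ a := ha_max _ hσc hbrc
    have hKP : ∀ H ∈ a, K (⁅X, σ X⁆ - K X (σ X) • Hlam) H = 0 := by
      intro H hH
      have e1 : K ⁅X, σ X⁆ H = K X (σ X) * lam H := by
        rw [hinv]
        have : (⁅σ X, H⁆ : L) = lam H • σ X := by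
          rw [← lie_skew, hσg X hX H hH]; simp
        rw [this, map_smul, smul_eq_mul, mul_comm]
      have e2 : K (K X (σ X) • Hlam) H = K X (σ X) * lam H := by
        rw [map_smul, LinearMap.smul_apply, hHlam_def H hH, smul_eq_mul]
      rw [map_sub, LinearMap.sub_apply, e1, e2, sub_self]
    exact sub_eq_zero.mp (hazero _ hPa hKP)
  -- main vanishing claim
  have hmain : ∀ w : L, (∀ H ∈ a, ⁅H, w⁆ = lam H • w) → K X (σ w) = 0 →
      (∀ Y : L, (σ Y = Y ∧ ∀ H ∈ a, ⁅H, Y⁆ = 0) → K ⁅Y, X⁆ (σ w) = 0) → w = 0 := by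
    intro w hw hwX hworth
    by_contra hw0
    have hσwa : ∀ H ∈ a, ⁅H, σ w⁆ = -(lam H • σ w) := hσg w hw
    have hσXa : ∀ H ∈ a, ⁅H, σ X⁆ = -(lam H • σ X) := hσg X hX
    -- W0 = ⁅X, σ w⁆, W1 = ⁅σ X, w⁆
    have hW0a : ∀ H ∈ a, ⁅H, (⁅X, σ w⁆ : L)⁆ = 0 := by
      intro H hH
      rw [leibniz_lie, hX H hH, hσwa H hH, smul_lie, lie_neg, lie_smul]
      abel
    have hW1a : ∀ H ∈ a, ⁅H, (⁅σ X, w⁆ : L)⁆ = 0 := by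
      intro H hH
      rw [leibniz_lie, hw H hH, hσXa H hH, neg_lie, smul_lie, lie_smul]
      abel
    have hσW0 : σ ⁅X, σ w⁆ = ⁅σ X, w⁆ := by rw [hσlie, hσinv]
    have hσW1 : σ ⁅σ X, w⁆ = ⁅X, σ w⁆ := by rw [hσlie, hσinv]
    have hUa : (⁅σ X, w⁆ - ⁅X, σ w⁆ : L) ∈ a := by
      apply ha_max
      · rw [map_sub, hσW0, hσW1]; abel
      · intro H hH
        rw [← lie_skew, lie_sub, hW0a H hH, hW1a H hH]
        simp
    have hKσXw : K (σ X) w = 0 := by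
      calc K (σ X) w = K (σ X) (σ (σ w)) := by rw [hσinv]
      _ = K X (σ w) := hσinvK _ _
      _ = 0 := hwX
    have hKW1H : ∀ H ∈ a, K ⁅σ X, w⁆ H = 0 := by
      intro H hH
      rw [hinv]
      have : (⁅w, H⁆ : L) = -(lam H • w) := by rw [← lie_skew, hw H hH]
      rw [this, map_neg, map_smul, hKσXw]
      simp
    have hKW0H : ∀ H ∈ a, K ⁅X, σ w⁆ H = 0 := by
      intro H hH
      rw [hinv]
      have : (⁅σ w, H⁆ : L) = lam H • σ w := by
        rw [← lie_skew, hσwa H hH]; simp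
      rw [this, map_smul, hwX]
      simp
    have hU0 : (⁅σ X, w⁆ - ⁅X, σ w⁆ : L) = 0 := by
      apply hazero _ hUa
      intro H hH
      rw [map_sub, LinearMap.sub_apply, hKW1H H hH, hKW0H H hH, sub_self]
    have hW10 : (⁅σ X, w⁆ : L) = ⁅X, σ w⁆ := sub_eq_zero.mp hU0
    have hWm : σ ⁅X, σ w⁆ = ⁅X, σ w⁆ := by rw [hσW0, hW10]
    -- orthogonality kills W0
    have horth : K ⁅(⁅X, σ w⁆ : L), X⁆ (σ w) = 0 := hworth _ ⟨hWm, hW0a⟩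
    have hKWW : K ⁅X, σ w⁆ ⁅X, σ w⁆ = 0 := by
      rw [← hinv]; exact horth
    have hW00 : (⁅X, σ w⁆ : L) = 0 := by
      apply hdef
      rw [hWm]; exact hKWW
    have hbrw : (⁅σ X, w⁆ : L) = 0 := by rw [hW10, hW00]
    -- now the sl2-style positivity argument
    have hQ : (⁅(⁅X, σ X⁆ : L), w⁆ : L) = -⁅σ X, ⁅X, w⁆⁆ := by
      rw [lie_lie, hbrw, lie_zero, zero_sub]
    have hh0w : (⁅(⁅X, σ X⁆ : L), w⁆ : L) = (K X (σ X) * lam Hlam) • w := by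
      rw [h0eq, smul_lie, hw Hlam hHlam, smul_smul]
    have hpair : (K X (σ X) * lam Hlam) * K w (σ w) = K ⁅X, w⁆ (σ ⁅X, w⁆) := by
      have e1 : K ((K X (σ X) * lam Hlam) • w) (σ w) = (K X (σ X) * lam Hlam) * K w (σ w) := by
        rw [map_smul, LinearMap.smul_apply, smul_eq_mul]
      have e2 : K (-⁅σ X, ⁅X, w⁆⁆ : L) (σ w) = K ⁅X, w⁆ (σ ⁅X, w⁆) := by
        have e3 := hski (σ X) ⁅X, w⁆ (σ w)
        -- e3 : K ⁅X,w⁆ ⁅σ X, σ w⁆ = -(K ⁅σ X, ⁅X,w⁆⁆ (σ w))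
        rw [← hσlie] at e3
        rw [map_neg, LinearMap.neg_apply, ← e3]
      rw [← e1, ← hh0w, hQ, e2]
    have h1 : K ⁅X, w⁆ (σ ⁅X, w⁆) ≤ 0 := hneg _
    have h2 : K w (σ w) < 0 := by have := hσpos w hw0; linarith
    have h3 : K X (σ X) * lam Hlam < 0 := mul_neg_of_neg_of_pos hb hll
    have h4 : 0 < (K X (σ X) * lam Hlam) * K w (σ w) := mul_pos_of_neg_of_neg h3 h2
    linarith
  -- the submodule m and the image ⁅m, X⁆
  let m' : Submodule ℝ L :=
    { carrier := {Y : L | σ Y = Y ∧ ∀ H ∈ a, ⁅H, Y⁆ = 0}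
      add_mem' := by
        rintro x y ⟨hx1, hx2⟩ ⟨hy1, hy2⟩
        exact ⟨by rw [map_add, hx1, hy1],
          fun H hH => by rw [lie_add, hx2 H hH, hy2 H hH, add_zero]⟩
      zero_mem' := ⟨map_zero σ, fun H _ => lie_zero H⟩
      smul_mem' := by
        rintro c x ⟨hx1, hx2⟩
        exact ⟨by rw [map_smul, hx1],
          fun H hH => by rw [lie_smul, hx2 H hH, smul_zero]⟩ }
  have hm' : ∀ Y : L, Y ∈ m' ↔ (σ Y = Y ∧ ∀ H ∈ a, ⁅H, Y⁆ = 0) := fun Y => Iff.rfl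
  let f : L →ₗ[ℝ] L := -(ad ℝ L X : L →ₗ[ℝ] L)
  have hf : ∀ Y : L, f Y = ⁅Y, X⁆ := by
    intro Y
    show -(⁅X, Y⁆ : L) = ⁅Y, X⁆
    exact lie_skew Y X
  -- orthogonal decomposition with respect to the positive definite form
  have hdecomp : ∀ (W : Submodule ℝ L) (Z : L),
      ∃ r ∈ W, ∃ w : L, (∀ n ∈ W, K n (σ w) = 0) ∧ Z = r + w := by
    intro W Z
    set B : LinearMap.BilinForm ℝ L := -(K.compl₂ σ) with hB
    have hBapp : ∀ x y : L, B x y = -(K x (σ y)) := by intro x y; simp [hB]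
    have hBrefl : B.IsRefl := by
      intro x y h
      rwa [hBapp, hipsym x y, ← hBapp] at h
    have hdisj : Disjoint W (B.orthogonal W) := by
      rw [Submodule.disjoint_def]
      intro x hxW hxO
      by_contra hx0
      have h1 : B x x = 0 := hxO x hxW
      rw [hBapp] at h1
      have := hσpos x hx0
      rw [hKdef] at this
      rw [show K x (σ x) = 0 by linarith] at this
      simp at this
    have hcompl : IsCompl W (B.orthogonal W) :=
      (LinearMap.BilinForm.isCompl_orthogonal_iff_disjoint hBrefl).2 hdisj
    have hZ : Z ∈ W ⊔ B.orthogonal W := hcompl.sup_eq_top ▸ Submodule.mem_top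
    obtain ⟨r, hr, w, hw, hrw⟩ := Submodule.mem_sup.1 hZ
    refine ⟨r, hr, w, ?_, hrw.symm⟩
    intro n hn
    have h2 : B n w = 0 := hw n hn
    rw [hBapp] at h2
    linarith
  -- surjectivity onto the orthogonal complement of X in g_lam
  have hsurj : ∀ Z : L, (∀ H ∈ a, ⁅H, Z⁆ = lam H • Z) → K X (σ Z) = 0 →
      ∃ Y : L, (σ Y = Y ∧ ∀ H ∈ a, ⁅H, Y⁆ = 0) ∧ Z = ⁅Y, X⁆ := by
    intro Z hZ hZX
    obtain ⟨r, hr, w, hworth, hrw⟩ := hdecomp (Submodule.map f m') Z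
    obtain ⟨Y0, hY0, hY0r⟩ := Submodule.mem_map.1 hr
    rw [hf] at hY0r
    obtain ⟨hY01, hY02⟩ := (hm' Y0).1 hY0
    have hrglam : ∀ H ∈ a, ⁅H, r⁆ = lam H • r := by
      rw [← hY0r]; exact hglam_bk Y0 hY02
    have hrX : K X (σ r) = 0 := by rw [← hY0r]; exact key1 Y0 hY01
    have hwglam : ∀ H ∈ a, ⁅H, w⁆ = lam H • w := by
      intro H hH
      have : w = Z - r := by rw [hrw]; abel
      rw [this, lie_sub, hZ H hH, hrglam H hH, smul_sub]
    have hwX : K X (σ w) = 0 := by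
      have hw' : w = Z - r := by rw [hrw]; abel
      rw [hw', map_sub, map_sub, hZX, hrX, sub_self]
    have hw0 : w = 0 := by
      apply hmain w hwglam hwX
      intro Y hY
      exact hworth ⁅Y, X⁆ (Submodule.mem_map.2 ⟨Y, (hm' Y).2 hY, hf Y⟩)
    refine ⟨Y0, ⟨hY01, hY02⟩, ?_⟩
    rw [hrw, hw0, add_zero, hY0r]
  -- assemble the three statements
  refine ⟨?_, ?_, ?_⟩
  · ext Z
    simp only [Set.mem_setOf_eq]
    constructor
    · rintro ⟨Y, ⟨hY1, hY2⟩, rfl⟩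
      exact ⟨hglam_bk Y hY2, key1 Y hY1⟩
    · rintro ⟨h1, h2⟩
      exact hsurj Z h1 h2
  · intro Z hZ
    set c := K X (σ Z) / K X (σ X) with hc
    have hZ' : ∀ H ∈ a, ⁅H, Z - c • X⁆ = lam H • (Z - c • X) := by
      intro H hH
      rw [lie_sub, lie_smul, hZ H hH, hX H hH, smul_sub, smul_comm]
    have hZ'X : K X (σ (Z - c • X)) = 0 := by
      rw [map_sub, map_smul, map_sub, map_smul, smul_eq_mul, hc]
      field_simp
      ring
    obtain ⟨Y, hY, hYe⟩ := hsurj _ hZ' hZ'X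
    exact ⟨c, Y, hY, by rw [← hYe]; abel⟩
  · intro c Y hYm hc
    obtain ⟨hY1, _⟩ := hYm
    have h := key1 Y hY1
    rw [← hc, map_smul, map_smul, smul_eq_mul] at h
    rcases mul_eq_zero.mp h with h | h
    · exact h
    · exact absurd h hbne
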